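/- Under the hypotheses of the discrete maximum principle setting (implicit upwind mass balance with conservative, discretely divergence-free fluxes and zero boundary fluxes), each time step satisfies the identity: (1/2)Σ_K |K|(ρ_K^{n+1})² + (δt/2) Σ_{interior faces σ=K|L} |σ|(ρ_L^{n+1} − ρ_K^{n+1})² |u_{K,σ}^{n+1}| + (1/2)Σ_K |K|(ρ_K^{n+1} − ρ_K^n)² = (1/2)Σ_K |K|(ρ_K^n)². In particular Σ_K |K|(ρ_K^{n+1})² ≤ Σ_K |K|(ρ_K^n)², and summing over n yields the weak BV estimate Σ_{n=1}^N δt Σ_{σ=K|L} |σ|(ρ_L^n − ρ_K^n)² |u_{K,σ}^n| ≤ Σ_K |K|(ρ_K^0)². -/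

import Mathlib

lemma swap_aux {C F : Type*} [Fintype C] [Fintype F] [DecidableEq C]
    (owner : F → C) (neighbor : F → Option C) (X : F → ℝ) (g : C → ℝ) :
    ∑ K : C, g K * ((∑ σ : F, if owner σ = K then X σ else 0)
        - ∑ σ : F, if neighbor σ = some K then X σ else 0)
      = ∑ σ : F, (X σ * g (owner σ) - (neighbor σ).elim 0 fun L => X σ * g L) := by
  have h1 : ∀ σ : F, ∑ K : C, (if owner σ = K then g K * X σ else 0) = X σ * g (owner σ) := by
    intro σ
    rw [Finset.sum_ite_eq]
    simp [mul_comm]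
  have h2 : ∀ σ : F, ∑ K : C, (if neighbor σ = some K then g K * X σ else 0)
      = (neighbor σ).elim 0 fun L => X σ * g L := by
    intro σ
    rcases h : neighbor σ with _ | L
    · simp
    · simp only [h, Option.elim, Option.some.injEq]
      rw [Finset.sum_ite_eq]
      simp [mul_comm]
  simp_rw [mul_sub, Finset.mul_sum, mul_ite, mul_zero]
  rw [Finset.sum_sub_distrib, Finset.sum_comm (f := fun K σ => if owner σ = K then g K * X σ else 0),
    Finset.sum_comm (f := fun K σ => if neighbor σ = some K then g K * X σ else 0),
    ← Finset.sum_sub_distrib]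
  exact Finset.sum_congr rfl fun σ _ => by rw [h1 σ, h2 σ]

lemma step_aux {C F : Type*} [Fintype C] [Fintype F] [DecidableEq C]
    (vol : C → ℝ) (area : F → ℝ)
    (owner : F → C) (neighbor : F → Option C)
    (δt : ℝ) (hδt : 0 < δt)
    (r s : C → ℝ) (u : F → ℝ) (f : F → ℝ)
    (hbnd : ∀ σ, neighbor σ = none → u σ = 0)
    (hupw : ∀ σ, f σ = if 0 ≤ u σ then r (owner σ) else r ((neighbor σ).getD (owner σ)))
    (hdiv : ∀ K, ((∑ σ : F, if owner σ = K then area σ * u σ else 0)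
        - ∑ σ : F, if neighbor σ = some K then area σ * u σ else 0) = 0)
    (hmass : ∀ K, vol K * (r K - s K) / δt
        + ((∑ σ : F, if owner σ = K then area σ * f σ * u σ else 0)
          - ∑ σ : F, if neighbor σ = some K then area σ * f σ * u σ else 0) = 0) :
    (1/2) * ∑ K : C, vol K * (r K)^2
      + (δt/2) * ∑ σ : F, ((neighbor σ).elim 0 fun L => area σ * (r L - r (owner σ))^2 * |u σ|)
      + (1/2) * ∑ K : C, vol K * (r K - s K)^2
    = (1/2) * ∑ K : C, vol K * (s K)^2 := by
  set A : C → ℝ := fun K => ((∑ σ : F, if owner σ = K then area σ * f σ * u σ else 0)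
          - ∑ σ : F, if neighbor σ = some K then area σ * f σ * u σ else 0) with hA
  have hAK : ∀ K, vol K * (r K - s K) = -(δt * A K) := by
    intro K
    have h := hmass K
    have h2 : vol K * (r K - s K) / δt = -A K := by rw [hA]; linarith
    rw [div_eq_iff hδt.ne'] at h2
    linarith
  -- sum of T
  have hT : ∑ K : C, r K * A K
      = ∑ σ : F, ((area σ * f σ * u σ) * r (owner σ)
          - (neighbor σ).elim 0 fun L => (area σ * f σ * u σ) * r L) := by
    rw [hA]
    exact swap_aux owner neighbor (fun σ => area σ * f σ * u σ) r
  -- sum of G is zero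
  have hG : (0:ℝ) = ∑ σ : F, ((area σ * u σ) * ((1/2) * (r (owner σ))^2)
      - (neighbor σ).elim 0 fun L => (area σ * u σ) * ((1/2) * (r L)^2)) := by
    rw [← swap_aux owner neighbor (fun σ => area σ * u σ) (fun K => (1/2) * (r K)^2)]
    rw [Finset.sum_congr rfl fun K _ => by rw [hdiv K, mul_zero]]
    simp
  -- per-face identity
  have hface : ∀ σ : F,
      ((area σ * f σ * u σ) * r (owner σ)
          - (neighbor σ).elim 0 fun L => (area σ * f σ * u σ) * r L)
      - ((area σ * u σ) * ((1/2) * (r (owner σ))^2)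
          - (neighbor σ).elim 0 fun L => (area σ * u σ) * ((1/2) * (r L)^2))
      = (1/2) * ((neighbor σ).elim 0 fun L => area σ * (r L - r (owner σ))^2 * |u σ|) := by
    intro σ
    rcases h : neighbor σ with _ | L
    · simp [hbnd σ h]
    · have hf := hupw σ
      rw [h] at hf
      simp only [Option.getD_some] at hf
      simp only [h, Option.elim]
      rcases le_or_gt 0 (u σ) with hu | hu
      · rw [abs_of_nonneg hu]; rw [if_pos hu] at hf; rw [hf]; ring
      · rw [abs_of_neg hu]; rw [if_neg (not_le.mpr hu)] at hf; rw [hf]; ring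
  have hTG : ∑ K : C, r K * A K
      = (1/2) * ∑ σ : F, ((neighbor σ).elim 0 fun L => area σ * (r L - r (owner σ))^2 * |u σ|) := by
    have h3 : ∑ σ : F, (((area σ * f σ * u σ) * r (owner σ)
          - (neighbor σ).elim 0 fun L => (area σ * f σ * u σ) * r L)
          - ((area σ * u σ) * ((1/2) * (r (owner σ))^2)
          - (neighbor σ).elim 0 fun L => (area σ * u σ) * ((1/2) * (r L)^2)))
        = ∑ σ : F, (1/2) * ((neighbor σ).elim 0 fun L =>
            area σ * (r L - r (owner σ))^2 * |u σ|) :=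
      Finset.sum_congr rfl fun σ _ => hface σ
    have h4 : ∑ σ : F, (((area σ * f σ * u σ) * r (owner σ)
          - (neighbor σ).elim 0 fun L => (area σ * f σ * u σ) * r L)
          - ((area σ * u σ) * ((1/2) * (r (owner σ))^2)
          - (neighbor σ).elim 0 fun L => (area σ * u σ) * ((1/2) * (r L)^2)))
        = (∑ σ : F, ((area σ * f σ * u σ) * r (owner σ)
          - (neighbor σ).elim 0 fun L => (area σ * f σ * u σ) * r L))
          - ∑ σ : F, ((area σ * u σ) * ((1/2) * (r (owner σ))^2)
          - (neighbor σ).elim 0 fun L => (area σ * u σ) * ((1/2) * (r L)^2)) :=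
      Finset.sum_sub_distrib _ _
    have h5 : ∑ σ : F, (1/2) * ((neighbor σ).elim 0 fun L =>
            area σ * (r L - r (owner σ))^2 * |u σ|)
        = (1/2) * ∑ σ : F, ((neighbor σ).elim 0 fun L =>
            area σ * (r L - r (owner σ))^2 * |u σ|) := (Finset.mul_sum _ _ _).symm
    rw [hT]
    linarith [hG]
  have hsum1 : ∑ K : C, vol K * r K * (r K - s K) = -(δt * ∑ K : C, r K * A K) := by
    calc ∑ K : C, vol K * r K * (r K - s K)
        = ∑ K : C, -(δt * (r K * A K)) :=
          Finset.sum_congr rfl fun K _ => by linear_combination (r K) * hAK K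
      _ = -(δt * ∑ K : C, r K * A K) := by rw [Finset.sum_neg_distrib, Finset.mul_sum]
  rw [hTG] at hsum1
  have hE : ∑ K : C, vol K * r K * (r K - s K)
      = (1/2) * ∑ K : C, vol K * (r K)^2 + (1/2) * ∑ K : C, vol K * (r K - s K)^2
        - (1/2) * ∑ K : C, vol K * (s K)^2 := by
    simp_rw [Finset.mul_sum, ← Finset.sum_add_distrib, ← Finset.sum_sub_distrib]
    exact Finset.sum_congr rfl fun K _ => by ring
  linear_combination hsum1 - hE

theorem stmt_6 {C F : Type*} [Fintype C] [Fintype F] [DecidableEq C]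
    (vol : C → ℝ) (hvol : ∀ K, 0 < vol K)
    (area : F → ℝ) (harea : ∀ σ, 0 < area σ)
    (owner : F → C) (neighbor : F → Option C)
    (N : ℕ) (δt : ℝ) (hδt : 0 < δt)
    (ρ : ℕ → C → ℝ) (u : ℕ → F → ℝ)
    (hbnd : ∀ n σ, neighbor σ = none → u n σ = 0)
    (ρface : ℕ → F → ℝ)
    (hupw : ∀ n σ, ρface n σ =
      if 0 ≤ u n σ then ρ n (owner σ) else ρ n ((neighbor σ).getD (owner σ)))
    (hdivfree : ∀ n K, n ≤ N →
      ((∑ σ : F, if owner σ = K then area σ * u n σ else 0)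
        - ∑ σ : F, if neighbor σ = some K then area σ * u n σ else 0) = 0)
    (hmass : ∀ n K, n < N →
      vol K * (ρ (n + 1) K - ρ n K) / δt
        + ((∑ σ : F, if owner σ = K then area σ * ρface (n + 1) σ * u (n + 1) σ else 0)
          - ∑ σ : F, if neighbor σ = some K then
              area σ * ρface (n + 1) σ * u (n + 1) σ else 0) = 0) :
    (∀ n, n < N →
      (1 / 2) * ∑ K : C, vol K * (ρ (n + 1) K) ^ 2
        + (δt / 2) * ∑ σ : F, ((neighbor σ).elim 0 fun L =>
            area σ * (ρ (n + 1) L - ρ (n + 1) (owner σ)) ^ 2 * |u (n + 1) σ|)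
        + (1 / 2) * ∑ K : C, vol K * (ρ (n + 1) K - ρ n K) ^ 2
      = (1 / 2) * ∑ K : C, vol K * (ρ n K) ^ 2)
    ∧ (∀ n, n < N →
        ∑ K : C, vol K * (ρ (n + 1) K) ^ 2 ≤ ∑ K : C, vol K * (ρ n K) ^ 2)
    ∧ (∑ n ∈ Finset.Icc 1 N, δt * ∑ σ : F, ((neighbor σ).elim 0 fun L =>
          area σ * (ρ n L - ρ n (owner σ)) ^ 2 * |u n σ|)
        ≤ ∑ K : C, vol K * (ρ 0 K) ^ 2) := by
  have key : ∀ n, n < N →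
      (1 / 2) * ∑ K : C, vol K * (ρ (n + 1) K) ^ 2
        + (δt / 2) * ∑ σ : F, ((neighbor σ).elim 0 fun L =>
            area σ * (ρ (n + 1) L - ρ (n + 1) (owner σ)) ^ 2 * |u (n + 1) σ|)
        + (1 / 2) * ∑ K : C, vol K * (ρ (n + 1) K - ρ n K) ^ 2
      = (1 / 2) * ∑ K : C, vol K * (ρ n K) ^ 2 := by
    intro n hn
    exact step_aux vol area owner neighbor δt hδt (ρ (n+1)) (ρ n) (u (n+1)) (ρface (n+1))
      (hbnd (n+1)) (hupw (n+1)) (fun K => hdivfree (n+1) K hn) (fun K => hmass n K hn)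
  -- nonnegativity facts
  have hDnn : ∀ m, 0 ≤ ∑ σ : F, ((neighbor σ).elim 0 fun L =>
      area σ * (ρ m L - ρ m (owner σ)) ^ 2 * |u m σ|) := by
    intro m
    apply Finset.sum_nonneg
    intro σ _
    rcases h : neighbor σ with _ | L
    · simp
    · simp only [Option.elim]
      exact mul_nonneg (mul_nonneg (harea σ).le (sq_nonneg _)) (abs_nonneg _)
  have hRnn : ∀ n, 0 ≤ ∑ K : C, vol K * (ρ (n + 1) K - ρ n K) ^ 2 := by
    intro n
    apply Finset.sum_nonneg
    intro K _
    exact mul_nonneg (hvol K).le (sq_nonneg _)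
  have hEnn : ∀ n, 0 ≤ ∑ K : C, vol K * (ρ n K) ^ 2 := by
    intro n
    apply Finset.sum_nonneg
    intro K _
    exact mul_nonneg (hvol K).le (sq_nonneg _)
  refine ⟨key, ?_, ?_⟩
  · intro n hn
    have h := key n hn
    nlinarith [hDnn (n+1), hRnn n, hδt]
  · have hstep : ∀ n, n < N →
        δt * ∑ σ : F, ((neighbor σ).elim 0 fun L =>
          area σ * (ρ (n+1) L - ρ (n+1) (owner σ)) ^ 2 * |u (n+1) σ|)
        ≤ (∑ K : C, vol K * (ρ n K) ^ 2) - ∑ K : C, vol K * (ρ (n+1) K) ^ 2 := by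
      intro n hn
      have h := key n hn
      nlinarith [hRnn n]
    rcases Nat.eq_zero_or_pos N with hN | hN
    · subst hN
      simp [hEnn 0]
    · rw [show Finset.Icc 1 N = Finset.Ico 1 (N + 1) from (Finset.Ico_add_one_right_eq_Icc 1 N).symm,
        Finset.sum_Ico_eq_sum_range]
      have htel : ∑ i ∈ Finset.range (N + 1 - 1),
          (δt * ∑ σ : F, ((neighbor σ).elim 0 fun L =>
            area σ * (ρ (1 + i) L - ρ (1 + i) (owner σ)) ^ 2 * |u (1 + i) σ|))
          ≤ ∑ i ∈ Finset.range (N + 1 - 1),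
            ((∑ K : C, vol K * (ρ i K) ^ 2) - ∑ K : C, vol K * (ρ (i+1) K) ^ 2) := by
        apply Finset.sum_le_sum
        intro i hi
        have hi' : i < N := by
          simpa using hi
        have := hstep i hi'
        rw [add_comm 1 i]
        exact this
      have htel2 : ∑ i ∈ Finset.range (N + 1 - 1),
          ((∑ K : C, vol K * (ρ i K) ^ 2) - ∑ K : C, vol K * (ρ (i+1) K) ^ 2)
          = (∑ K : C, vol K * (ρ 0 K) ^ 2) - ∑ K : C, vol K * (ρ (N+1-1) K) ^ 2 :=
        Finset.sum_range_sub' (fun i => ∑ K : C, vol K * (ρ i K) ^ 2) (N + 1 - 1)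
      rw [htel2] at htel
      have := hEnn (N + 1 - 1)
      linarith
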